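/- Let h(z) = Σ_{k=0}^∞ a_k z^k and g(z) = Σ_{k=1}^∞ b_k z^k be analytic on the unit disk 𝔻 with |h(z)| < 1 for all z ∈ 𝔻, and suppose g'(z) = η z h'(z) for some |η| = 1 and all z ∈ 𝔻. Then for every r with 0 ≤ r < 1, Σ_{k=1}^∞ k |a_k|² r^{2k} − Σ_{k=2}^∞ k |b_k|² r^{2k} ≤ (1 − |a_0|²)² · [2r²/(1 − r²) + log(1 − r²)]. -/

import Mathlib

open Metric

open Complex FormalMultilinearSeries
open scoped ENNReal NNReal Real ComplexConjugate

lemma norm_lt_one_of_mem_ball {y : ℂ} (hy : y ∈ Metric.eball (0:ℂ) 1) : ‖y‖ < 1 := by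
  rw [Metric.mem_eball, edist_zero_right, ← ofReal_norm, ENNReal.ofReal_lt_one] at hy
  simpa using hy

/-- Pointwise power series representation on the unit ball gives `HasFPowerSeriesOnBall`. -/
lemma lemA (c : ℕ → ℂ) (F : ℂ → ℂ)
    (hc : ∀ z : ℂ, ‖z‖ < 1 → HasSum (fun k => c k * z ^ k) (F z)) :
    HasFPowerSeriesOnBall F (FormalMultilinearSeries.ofScalars ℂ c) 0 1 := by
  refine ⟨?_, one_pos, fun {y} hy => ?_⟩
  · apply ENNReal.le_of_forall_nnreal_lt
    intro s hs
    have hs1 : (s : ℝ) < 1 := by exact_mod_cast hs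
    have habs : ‖((s : ℝ) : ℂ)‖ < 1 := by
      simpa [Complex.norm_real, _root_.abs_of_nonneg s.2] using hs1
    have hsum : Summable fun k => c k * ((s : ℝ) : ℂ) ^ k := (hc _ habs).summable
    apply FormalMultilinearSeries.le_radius_of_isBigO
    have h0 : Filter.Tendsto (fun k => ‖c k * ((s : ℝ) : ℂ) ^ k‖) Filter.atTop (nhds 0) := by
      simpa using hsum.tendsto_atTop_zero.norm
    have he : (fun n => ‖ofScalars ℂ c n‖ * (s : ℝ) ^ n) = fun n => ‖c n * ((s : ℝ) : ℂ) ^ n‖ := by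
      funext n
      rw [ofScalars_norm, norm_mul, norm_pow]
      simp [Complex.norm_real, _root_.abs_of_nonneg s.2]
    rw [he]
    exact h0.isBigO_one ℝ
  · have hy' : ‖y‖ < 1 := norm_lt_one_of_mem_ball hy
    have := hc y hy'
    have he : ∀ n : ℕ, (ofScalars ℂ c n fun _ => y) = c n * y ^ n := fun n => by
      rw [FormalMultilinearSeries.ofScalars_apply_eq]; simp [smul_eq_mul]
    rw [zero_add]
    exact HasSum.congr_fun this he

/-- Uniqueness of power series coefficients. -/
lemma lemB (c d : ℕ → ℂ) (F : ℂ → ℂ)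
    (hc : ∀ z : ℂ, ‖z‖ < 1 → HasSum (fun k => c k * z ^ k) (F z))
    (hd : ∀ z : ℂ, ‖z‖ < 1 → HasSum (fun k => d k * z ^ k) (F z)) : c = d := by
  have h1 := (lemA c F hc).hasFPowerSeriesAt
  have h2 := (lemA d F hd).hasFPowerSeriesAt
  have := h1.eq_formalMultilinearSeries h2
  rwa [FormalMultilinearSeries.ofScalars_series_eq_iff] at this

/-- Termwise derivative of a power series. -/
lemma hasSum_deriv (c : ℕ → ℂ) (F : ℂ → ℂ)
    (hc : ∀ z : ℂ, ‖z‖ < 1 → HasSum (fun k => c k * z ^ k) (F z))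
    (z : ℂ) (hz : ‖z‖ < 1) :
    HasSum (fun k : ℕ => ((k : ℂ) + 1) * c (k + 1) * z ^ k) (deriv F z) := by
  have hp := lemA c F hc
  rcases eq_or_ne z 0 with rfl | hz0
  · have hder : deriv F 0 = c 1 := by
      rw [hp.hasFPowerSeriesAt.deriv, FormalMultilinearSeries.ofScalars_apply_eq]
      simp
    rw [hder]
    convert hasSum_single (f := fun k : ℕ => ((k : ℂ) + 1) * c (k + 1) * (0:ℂ) ^ k) 0 ?_ using 1
    · simp
    · intro b hb
      simp [zero_pow hb]
  · have hmem : z ∈ Metric.eball (0:ℂ) 1 := by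
      rw [Metric.mem_eball, edist_zero_right, ← ofReal_norm, ENNReal.ofReal_lt_one]
      simpa using hz
    have hf := hp.fderiv
    have h1 : HasSum (fun n => (ofScalars ℂ c).derivSeries n (fun _ => z)) (fderiv ℂ F (0 + z)) :=
      hf.hasSum hmem
    have h2 := (ContinuousLinearMap.apply ℂ ℂ z).hasSum h1
    simp only [ContinuousLinearMap.apply_apply] at h2
    have h3 : ∀ n : ℕ, ((ofScalars ℂ c).derivSeries n (fun _ => z)) z
        = ((n : ℂ) + 1) * c (n + 1) * z ^ (n + 1) := by
      intro n
      rw [FormalMultilinearSeries.derivSeries_apply_diag,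
        FormalMultilinearSeries.ofScalars_apply_eq]
      push_cast
      rw [nsmul_eq_mul]
      push_cast
      simp only [smul_eq_mul]
      ring
    have h4 : (fderiv ℂ F (0 + z)) z = z * deriv F z := by
      rw [zero_add]
      conv_lhs => rw [show z = z • (1:ℂ) by simp]
      rw [map_smul, fderiv_apply_one_eq_deriv]
      simp [smul_eq_mul]
    rw [h4] at h2
    have h5 := (h2.congr_fun (fun n => (h3 n).symm)).div_const z
    rw [mul_comm z (deriv F z), mul_div_assoc, div_self hz0, mul_one] at h5
    refine h5.congr_fun fun n => ?_
    field_simp [pow_succ]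
    ring

/-- Schwarz–Pick at the origin. -/
lemma schwarzPick (f : ℂ → ℂ) (hf : DifferentiableOn ℂ f (ball (0:ℂ) 1))
    (hfb : ∀ z ∈ ball (0:ℂ) 1, ‖f z‖ < 1) :
    ‖deriv f 0‖ ≤ 1 - ‖f 0‖ ^ 2 := by
  set a : ℂ := f 0 with ha_def
  have h0 : (0:ℂ) ∈ ball (0:ℂ) 1 := by simp
  have ha : ‖a‖ < 1 := hfb 0 h0
  have key : ∀ w : ℂ, normSq (1 - conj a * w) - normSq (w - a)
      = (1 - normSq a) * (1 - normSq w) := by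
    intro w
    simp only [normSq_apply, Complex.sub_re, Complex.sub_im, Complex.mul_re, Complex.mul_im,
      Complex.conj_re, Complex.conj_im, Complex.one_re, Complex.one_im]
    ring
  have hden : ∀ w : ℂ, ‖w‖ < 1 → 1 - conj a * w ≠ 0 := by
    intro w hw h
    have : ‖conj a * w‖ = 1 := by
      have : conj a * w = 1 := by linear_combination -h
      rw [this]; simp
    rw [norm_mul, Complex.norm_conj] at this
    nlinarith [norm_nonneg w, norm_nonneg a, ha, hw]
  set m : ℂ → ℂ := fun w => (w - a) / (1 - conj a * w) with hm_def
  have hmaps : ∀ w : ℂ, ‖w‖ < 1 → ‖m w‖ < 1 := by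
    intro w hw
    have hdw := hden w hw
    have hdwp : 0 < ‖1 - conj a * w‖ := norm_pos_iff.mpr hdw
    have hna : normSq a < 1 := by
      rw [← Complex.sq_norm]; nlinarith [norm_nonneg a]
    have hnw : normSq w < 1 := by
      rw [← Complex.sq_norm]; nlinarith [norm_nonneg w]
    have hlt : normSq (w - a) < normSq (1 - conj a * w) := by
      nlinarith [key w]
    rw [hm_def]
    simp only [norm_div]
    rw [div_lt_one hdwp, ← Complex.sq_norm (w - a), ← Complex.sq_norm (1 - conj a * w)] at *
    nlinarith [norm_nonneg (w - a), hdwp]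
  set F : ℂ → ℂ := fun z => m (f z) with hF_def
  have hmdiff : ∀ w : ℂ, ‖w‖ < 1 → DifferentiableAt ℂ m w := by
    intro w hw
    apply DifferentiableAt.div
    · exact differentiableAt_id.sub_const a
    · exact (differentiableAt_const (1:ℂ)).sub ((differentiableAt_const (conj a)).mul differentiableAt_id)
    · exact hden w hw
  have hFd : DifferentiableOn ℂ F (ball (0:ℂ) 1) := by
    intro z hz
    exact ((hmdiff (f z) (hfb z hz)).comp_differentiableWithinAt z (hf z hz))
  have hF0 : F 0 = 0 := by
    simp [hF_def, hm_def, ha_def]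
  have hFmaps : Set.MapsTo F (ball (0:ℂ) 1) (ball (F 0) 1) := by
    intro z hz
    rw [hF0]
    have := hmaps (f z) (hfb z hz)
    simpa [mem_ball_zero_iff] using this
  have hSch : ‖deriv F 0‖ ≤ 1 / 1 :=
    Complex.norm_deriv_le_div_of_mapsTo_ball hFd (hFmaps.mono_right ball_subset_closedBall) one_pos
  -- chain rule
  have hnum : HasDerivAt (fun w : ℂ => w - a) 1 a := (hasDerivAt_id a).sub_const a
  have hden' : HasDerivAt (fun w : ℂ => 1 - conj a * w) (-(conj a)) a := by
    simpa using (((hasDerivAt_id a).const_mul (conj a)).const_sub 1)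
  have hmd : HasDerivAt m
      ((1 * (1 - conj a * a) - (a - a) * -(conj a)) / (1 - conj a * a) ^ 2) a :=
    hnum.div hden' (hden a ha)
  have hf0 : DifferentiableAt ℂ f 0 := hf.differentiableAt (Metric.isOpen_ball.mem_nhds h0)
  have hcomp : HasDerivAt F
      (((1 * (1 - conj a * a) - (a - a) * -(conj a)) / (1 - conj a * a) ^ 2) * deriv f 0) 0 := by
    exact HasDerivAt.comp 0 (by rwa [← ha_def]) hf0.hasDerivAt
  have hderivF : deriv F 0
      = ((1 - conj a * a) / (1 - conj a * a) ^ 2) * deriv f 0 := by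
    have := hcomp.deriv
    rw [this]; ring_nf
  have hca : conj a * a = ((normSq a : ℝ) : ℂ) := by
    rw [mul_comm, Complex.mul_conj]
  have hne : (1 : ℝ) - normSq a > 0 := by
    have : normSq a < 1 := by rw [← Complex.sq_norm]; nlinarith [norm_nonneg a]
    linarith
  have habs : ‖(1 - conj a * a) / (1 - conj a * a) ^ 2‖ = (1 - normSq a)⁻¹ := by
    rw [hca, norm_div, norm_pow]
    have : (1 : ℂ) - ((normSq a : ℝ) : ℂ) = (((1 - normSq a : ℝ)) : ℂ) := by push_cast; ring
    rw [this, Complex.norm_real, Real.norm_eq_abs, abs_of_pos hne]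
    field_simp
  rw [hderivF, norm_mul, habs] at hSch
  have h2 : ‖deriv f 0‖ ≤ 1 - normSq a := by
    have h3 := mul_le_mul_of_nonneg_left hSch hne.le
    rw [← mul_assoc, mul_inv_cancel₀ (ne_of_gt hne), one_mul] at h3
    simpa using h3
  rw [Complex.sq_norm]
  exact h2

lemma rootSum (n : ℕ) (hn : 0 < n) (m : ℕ) :
    ∑ j ∈ Finset.range n, (Complex.exp (2 * π * I / n)) ^ (j * m)
      = if n ∣ m then (n : ℂ) else 0 := by
  set ζ := Complex.exp (2 * π * I / n) with hζ
  have hprim := Complex.isPrimitiveRoot_exp n hn.ne'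
  have hpow : ∀ j : ℕ, ζ ^ (j * m) = (ζ ^ m) ^ j := fun j => by
    rw [← pow_mul, mul_comm]
  simp_rw [hpow]
  by_cases hdvd : n ∣ m
  · have h1 : ζ ^ m = 1 := (hprim.pow_eq_one_iff_dvd m).mpr hdvd
    simp [h1, hdvd]
  · have h1 : ζ ^ m ≠ 1 := fun e => hdvd ((hprim.pow_eq_one_iff_dvd m).mp e)
    rw [geom_sum_eq h1, if_neg hdvd, ← pow_mul, mul_comm m n, pow_mul, hprim.pow_eq_one]
    simp

lemma coeffBound (f : ℂ → ℂ) (a : ℕ → ℂ)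
    (hfa : ∀ z ∈ ball (0:ℂ) 1, HasSum (fun k => a k * z ^ k) (f z))
    (hfb : ∀ z ∈ ball (0:ℂ) 1, ‖f z‖ < 1)
    (n : ℕ) (hn : 0 < n) : ‖a n‖ ≤ 1 - ‖a 0‖ ^ 2 := by
  set ζ := Complex.exp (2 * π * I / n) with hζ
  have hζabs : ‖ζ‖ = 1 := by
    have : (2 * (π:ℂ) * I / n) = ((2 * π / n : ℝ) : ℂ) * I := by push_cast; ring
    rw [hζ, this, Complex.norm_exp_ofReal_mul_I]
  -- step 1 : averaged sums
  have claim1 : ∀ z : ℂ, ‖z‖ < 1 → HasSum (fun k => a (n * k) * (z ^ n) ^ k)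
      ((n : ℂ)⁻¹ * ∑ j ∈ Finset.range n, f (ζ ^ j * z)) := by
    intro z hz
    have hmem : ∀ j : ℕ, ζ ^ j * z ∈ ball (0:ℂ) 1 := by
      intro j
      rw [mem_ball_zero_iff]
      show ‖ζ ^ j * z‖ < 1
      rw [norm_mul, norm_pow, hζabs, one_pow, one_mul]
      exact hz
    have hsum : HasSum (fun m => ∑ j ∈ Finset.range n, a m * (ζ ^ j * z) ^ m)
        (∑ j ∈ Finset.range n, f (ζ ^ j * z)) :=
      hasSum_sum fun j _ => hfa _ (hmem j)
    have hterm : ∀ m : ℕ, (∑ j ∈ Finset.range n, a m * (ζ ^ j * z) ^ m)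
        = (if n ∣ m then (n:ℂ) * (a m * z ^ m) else 0) := by
      intro m
      have : ∀ j : ℕ, a m * (ζ ^ j * z) ^ m = ζ ^ (j * m) * (a m * z ^ m) := fun j => by
        rw [mul_pow, ← pow_mul]; ring
      simp_rw [this, ← Finset.sum_mul, hζ, rootSum n hn m]
      split_ifs <;> simp
    have hsum2 : HasSum (fun m => if n ∣ m then (n:ℂ) * (a m * z ^ m) else 0)
        (∑ j ∈ Finset.range n, f (ζ ^ j * z)) :=
      hsum.congr_fun fun m => (hterm m).symm
    have hinj : Function.Injective (fun k : ℕ => n * k) :=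
      fun x y e => by simpa [Nat.mul_left_cancel_iff hn] using e
    have hvan : ∀ m : ℕ, m ∉ Set.range (fun k : ℕ => n * k) →
        (if n ∣ m then (n:ℂ) * (a m * z ^ m) else 0) = 0 := by
      intro m hm
      rw [if_neg]
      rintro ⟨k, rfl⟩
      exact hm ⟨k, rfl⟩
    have hsum3 := (hinj.hasSum_iff hvan).mpr hsum2
    have hsum4 : HasSum (fun k => (n:ℂ) * (a (n * k) * (z ^ n) ^ k))
        (∑ j ∈ Finset.range n, f (ζ ^ j * z)) := by
      refine hsum3.congr_fun fun k => ?_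
      simp only [Function.comp_apply]
      rw [if_pos ⟨k, rfl⟩, ← pow_mul]
    have := hsum4.mul_left (n:ℂ)⁻¹
    refine this.congr_fun fun k => ?_
    rw [← mul_assoc, inv_mul_cancel₀ (by exact_mod_cast hn.ne' : (n:ℂ) ≠ 0), one_mul]
  -- step 2 : nth roots
  have claim2 : ∀ w : ℂ, ‖w‖ < 1 → ∃ z : ℂ, ‖z‖ < 1 ∧ z ^ n = w := by
    intro w hw
    rcases eq_or_ne w 0 with rfl | hw0
    · exact ⟨0, by simpa using zero_lt_one, by simp [zero_pow hn.ne']⟩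
    · refine ⟨w ^ ((n:ℂ)⁻¹), ?_, Complex.cpow_nat_inv_pow w hn.ne'⟩
      have habs : ‖w ^ ((n:ℂ)⁻¹)‖ = ‖w‖ ^ ((n:ℝ)⁻¹) := by
        rw [Complex.norm_cpow_of_ne_zero hw0]
        have h1 : ((n:ℂ)⁻¹).im = 0 := by
          rw [show ((n:ℂ)⁻¹) = (((n:ℝ)⁻¹ : ℝ) : ℂ) by push_cast; ring]
          simp
        have h2 : ((n:ℂ)⁻¹).re = (n:ℝ)⁻¹ := by
          rw [show ((n:ℂ)⁻¹) = (((n:ℝ)⁻¹ : ℝ) : ℂ) by push_cast; ring]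
          simp
        rw [h1, h2]
        simp
      show ‖w ^ ((n:ℂ)⁻¹)‖ < 1
      rw [habs]
      exact Real.rpow_lt_one (norm_nonneg w) hw (by positivity)
  -- step 3 : the function G
  set c' : ℕ → ℂ := fun k => a (n * k) with hc'
  set G : ℂ → ℂ := fun w => ∑' k, c' k * w ^ k with hG
  have claimG : ∀ w : ℂ, ‖w‖ < 1 →
      HasSum (fun k => c' k * w ^ k) (G w) ∧ ‖G w‖ < 1 := by
    intro w hw
    obtain ⟨z, hz, hzw⟩ := claim2 w hw
    have H := claim1 z hz
    rw [hzw] at H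
    have hGw : G w = (n : ℂ)⁻¹ * ∑ j ∈ Finset.range n, f (ζ ^ j * z) := H.tsum_eq
    have hmem : ∀ j : ℕ, ζ ^ j * z ∈ ball (0:ℂ) 1 := by
      intro j
      rw [mem_ball_zero_iff]
      show ‖ζ ^ j * z‖ < 1
      rw [norm_mul, norm_pow, hζabs, one_pow, one_mul]
      exact hz
    constructor
    · rw [hGw]; exact H
    · rw [hGw, norm_mul, norm_inv, Complex.norm_natCast]
      have hlt : ‖∑ j ∈ Finset.range n, f (ζ ^ j * z)‖ < n :=
        calc ‖∑ j ∈ Finset.range n, f (ζ ^ j * z)‖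
            ≤ ∑ j ∈ Finset.range n, ‖f (ζ ^ j * z)‖ :=
              norm_sum_le _ _
          _ < ∑ _j ∈ Finset.range n, (1:ℝ) :=
              Finset.sum_lt_sum_of_nonempty (Finset.nonempty_range_iff.mpr hn.ne')
                (fun j _ => hfb _ (hmem j))
          _ = n := by simp
      have hnpos : (0:ℝ) < (n:ℝ)⁻¹ := by positivity
      calc ((n:ℝ))⁻¹ * ‖∑ j ∈ Finset.range n, f (ζ ^ j * z)‖
          < (n:ℝ)⁻¹ * n := by exact mul_lt_mul_of_pos_left hlt hnpos
        _ = 1 := by field_simp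
  have hGball := lemA c' G (fun z hz => (claimG z hz).1)
  have hsubset : ball (0:ℂ) 1 ⊆ Metric.eball (0:ℂ) 1 := by
    intro z hz
    rw [Metric.mem_eball, edist_zero_right, ← ofReal_norm, ENNReal.ofReal_lt_one]
    simpa using mem_ball_zero_iff.mp hz
  have hGdiff : DifferentiableOn ℂ G (ball (0:ℂ) 1) :=
    (hGball.differentiableOn).mono hsubset
  have hGb : ∀ w ∈ ball (0:ℂ) 1, ‖G w‖ < 1 :=
    fun w hw => (claimG w (mem_ball_zero_iff.mp hw)).2
  have hG0 : G 0 = a 0 := by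
    have h1 := (claimG 0 (by norm_num)).1
    have h2 : HasSum (fun k => c' k * (0:ℂ) ^ k) (c' 0 * (0:ℂ) ^ 0) :=
      hasSum_single 0 (fun b hb => by simp [zero_pow hb])
    have := h1.unique h2
    simpa [hc'] using this
  have hGderiv : deriv G 0 = a n := by
    rw [hGball.hasFPowerSeriesAt.deriv, FormalMultilinearSeries.ofScalars_apply_eq]
    simp [hc']
  have := schwarzPick G hGdiff hGb
  rwa [hGderiv, hG0] at this

lemma S1lemma {x : ℝ} (h0 : 0 ≤ x) (h1 : x < 1) :
    HasSum (fun k : ℕ => ((k:ℝ)+1) * x ^ (k+1)) (x/(1-x)^2) := by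
  have hnorm : ‖x‖ < 1 := by rw [Real.norm_eq_abs, _root_.abs_of_nonneg h0]; exact h1
  have A1 : HasSum (fun m : ℕ => (m:ℝ) * x ^ m) (x/(1-x)^2) :=
    hasSum_coe_mul_geometric_of_norm_lt_one hnorm
  have := (hasSum_nat_add_iff (f := fun m : ℕ => (m:ℝ) * x ^ m) 1).mpr (by simpa using A1)
  refine this.congr_fun fun k => ?_
  push_cast; ring

lemma hasSumT {x : ℝ} (h0 : 0 ≤ x) (h1 : x < 1) :
    HasSum (fun k : ℕ => ((k:ℝ)+1) * x^(k+1) - (((k:ℝ)+1)^2/((k:ℝ)+2)) * x^(k+2))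
      (2*x/(1-x) + Real.log (1-x)) := by
  have hx1 : (1:ℝ) - x ≠ 0 := by linarith
  have hnorm : ‖x‖ < 1 := by rw [Real.norm_eq_abs, _root_.abs_of_nonneg h0]; exact h1
  have A1 : HasSum (fun m : ℕ => (m:ℝ) * x ^ m) (x/(1-x)^2) :=
    hasSum_coe_mul_geometric_of_norm_lt_one hnorm
  have S1 : HasSum (fun k : ℕ => ((k:ℝ)+1) * x ^ (k+1)) (x/(1-x)^2) := by
    have := (hasSum_nat_add_iff (f := fun m : ℕ => (m:ℝ) * x ^ m) 1).mpr (by simpa using A1)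
    refine this.congr_fun fun k => ?_
    push_cast; ring
  have S2 : HasSum (fun k : ℕ => ((k:ℝ)+2) * x ^ (k+2)) (x/(1-x)^2 - x) := by
    have := (hasSum_nat_add_iff (f := fun m : ℕ => (m:ℝ) * x ^ m) 2).mpr
      (by rw [show x/(1-x)^2 - x + ∑ i ∈ Finset.range 2, (i:ℝ) * x ^ i = x/(1-x)^2 by
        simp [Finset.sum_range_succ]]; exact A1)
    refine this.congr_fun fun k => ?_
    push_cast; ring
  have S3 : HasSum (fun k : ℕ => x ^ (k+2)) (x^2 * (1-x)⁻¹) := by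
    have := (hasSum_geometric_of_lt_one h0 h1).mul_left (x^2)
    refine this.congr_fun fun k => ?_
    rw [pow_add]; ring
  have L : HasSum (fun m : ℕ => x^(m+1)/((m:ℝ)+1)) (-Real.log (1-x)) := by
    have := Real.hasSum_pow_div_log_of_abs_lt_one (by rwa [_root_.abs_of_nonneg h0])
    refine this.congr_fun fun k => ?_
    push_cast; ring_nf
  have S4 : HasSum (fun k : ℕ => x^(k+2)/((k:ℝ)+2)) (-Real.log (1-x) - x) := by
    have := (hasSum_nat_add_iff (f := fun m : ℕ => x^(m+1)/((m:ℝ)+1)) 1).mpr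
      (by rw [show -Real.log (1-x) - x + ∑ i ∈ Finset.range 1, x^(i+1)/((i:ℝ)+1)
          = -Real.log (1-x) by simp]; exact L)
    refine this.congr_fun fun k => ?_
    push_cast; ring_nf
  have H := (S1.sub S2).add ((S3.mul_left 2).sub S4)
  have hval : x/(1-x)^2 - (x/(1-x)^2 - x) + (2 * (x^2 * (1-x)⁻¹) - (-Real.log (1-x) - x))
      = 2*x/(1-x) + Real.log (1-x) := by
    field_simp
    ring
  rw [hval] at H
  refine H.congr_fun fun k => ?_
  have hk2 : ((k:ℝ)+2) ≠ 0 := by positivity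
  field_simp
  ring

/-- Area bound for harmonic mappings with dilatation `g'(z) = η z h'(z)`, `|η| = 1`:
if `|h| < 1` on the unit disk, then for `0 ≤ r < 1`,
`∑_{k≥1} k|aₖ|² r^{2k} - ∑_{k≥2} k|bₖ|² r^{2k} ≤ (1-|a₀|²)²·[2r²/(1-r²) + log(1-r²)]`. -/
theorem stmt16 (h g : ℂ → ℂ) (a b : ℕ → ℂ) (hb0 : b 0 = 0)
    (hha : ∀ z ∈ ball (0:ℂ) 1, HasSum (fun k => a k * z ^ k) (h z))
    (hga : ∀ z ∈ ball (0:ℂ) 1, HasSum (fun k => b k * z ^ k) (g z))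
    (hhd : DifferentiableOn ℂ h (ball (0:ℂ) 1))
    (hgd : DifferentiableOn ℂ g (ball (0:ℂ) 1))
    (hb : ∀ z ∈ ball (0:ℂ) 1, ‖h z‖ < 1)
    (η : ℂ) (hη : ‖η‖ = 1)
    (hd : ∀ z ∈ ball (0:ℂ) 1, deriv g z = η * z * deriv h z)
    (r : ℝ) (hr0 : 0 ≤ r) (hr : r < 1) :
    (∑' k : ℕ, ((k:ℝ)+1) * (‖a (k+1)‖)^2 * r ^ (2*(k+1)))
      - (∑' k : ℕ, ((k:ℝ)+2) * (‖b (k+2)‖)^2 * r ^ (2*(k+2)))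
      ≤ (1 - (‖a 0‖)^2)^2
          * (2 * r^2 / (1 - r^2) + Real.log (1 - r^2)) := by
  have hha' : ∀ z : ℂ, ‖z‖ < 1 → HasSum (fun k => a k * z ^ k) (h z) :=
    fun z hz => hha z (mem_ball_zero_iff.mpr hz)
  have hga' : ∀ z : ℂ, ‖z‖ < 1 → HasSum (fun k => b k * z ^ k) (g z) :=
    fun z hz => hga z (mem_ball_zero_iff.mpr hz)
  -- coefficient relation b (k+2) = η (k+1) a (k+1) / (k+2)
  have hderh := hasSum_deriv a h hha'
  have hderg := hasSum_deriv b g hga'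
  set d : ℕ → ℂ := fun k => ((k:ℂ)+1) * b (k+1) with hd_def
  set e : ℕ → ℂ := fun k => η * (k:ℂ) * a k with he_def
  have hdsum : ∀ z : ℂ, ‖z‖ < 1 → HasSum (fun k => d k * z ^ k) (deriv g z) := by
    intro z hz
    exact (hderg z hz).congr_fun fun k => by rw [hd_def]
  have hesum : ∀ z : ℂ, ‖z‖ < 1 → HasSum (fun k => e k * z ^ k) (deriv g z) := by
    intro z hz
    have H1 := (hderh z hz).mul_left (η * z)
    have hval : η * z * deriv h z = deriv g z := (hd z (mem_ball_zero_iff.mpr hz)).symm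
    rw [hval] at H1
    have H2 : HasSum (fun k : ℕ => e (k+1) * z ^ (k+1)) (deriv g z) := by
      refine H1.congr_fun fun k => ?_
      rw [he_def]
      push_cast
      ring
    have hinj : Function.Injective (fun k : ℕ => k + 1) := add_left_injective 1
    have hvan : ∀ m : ℕ, m ∉ Set.range (fun k : ℕ => k + 1) → e m * z ^ m = 0 := by
      intro m hm
      have hm0 : m = 0 := by
        by_contra h0
        exact hm ⟨m - 1, by show m - 1 + 1 = m; omega⟩
      subst hm0
      simp [he_def]
    exact (hinj.hasSum_iff hvan).mp H2
  have huniq : d = e := lemB d e (deriv g) hdsum hesum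
  have hbrel : ∀ k : ℕ, ‖b (k+2)‖
      = ((k:ℝ)+1) * ‖a (k+1)‖ / ((k:ℝ)+2) := by
    intro k
    have hk := congrFun huniq (k+1)
    rw [hd_def, he_def] at hk
    have hk2 : ((k:ℂ)+1+1) ≠ 0 := by
      rw [show ((k:ℂ)+1+1) = ((k+2 : ℕ) : ℂ) by push_cast; ring]
      exact_mod_cast Nat.succ_ne_zero (k+1)
    have hb2 : b (k+2) = η * ((k:ℂ)+1) * a (k+1) / ((k:ℂ)+1+1) := by
      push_cast at hk ⊢
      field_simp at hk ⊢
      linear_combination hk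
    rw [hb2, norm_div, norm_mul, norm_mul, hη, one_mul]
    have e1 : ‖(k:ℂ)+1‖ = (k:ℝ)+1 := by
      rw [show ((k:ℂ)+1) = ((k+1 : ℕ) : ℂ) by push_cast; ring, Complex.norm_natCast]
      push_cast; ring
    have e2 : ‖(k:ℂ)+1+1‖ = (k:ℝ)+2 := by
      rw [show ((k:ℂ)+1+1) = ((k+2 : ℕ) : ℂ) by push_cast; ring, Complex.norm_natCast]
      push_cast; ring
    rw [e1, e2]
  -- coefficient bound
  set M : ℝ := 1 - ‖a 0‖ ^ 2 with hM_def
  have hM : ∀ k : ℕ, ‖a (k+1)‖ ≤ M :=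
    fun k => coeffBound h a hha hb (k+1) (Nat.succ_pos k)
  have hM0 : 0 ≤ M := le_trans (norm_nonneg (a 1)) (hM 0)
  -- series setup
  set x : ℝ := r ^ 2 with hx_def
  have hx0 : 0 ≤ x := sq_nonneg r
  have hx1 : x < 1 := by nlinarith
  set T : ℕ → ℝ := fun k => ((k:ℝ)+1) * x^(k+1) - (((k:ℝ)+1)^2/((k:ℝ)+2)) * x^(k+2) with hT_def
  have hT := hasSumT hx0 hx1
  have hTnonneg : ∀ k, 0 ≤ T k := by
    intro k
    rw [hT_def]
    have hp : (0:ℝ) ≤ x^(k+1) := pow_nonneg hx0 _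
    have hq : (0:ℝ) < (k:ℝ)+2 := by positivity
    rw [sub_nonneg, div_mul_eq_mul_div, div_le_iff₀ hq]
    have hx2 : x^(k+2) = x^(k+1) * x := by ring
    nlinarith [mul_le_mul_of_nonneg_left hx1.le (by positivity : (0:ℝ) ≤ ((k:ℝ)+1)^2 * x^(k+1))]
  set fa : ℕ → ℝ := fun k => ((k:ℝ)+1) * (‖a (k+1)‖)^2 * r ^ (2*(k+1)) with hfa_def
  set fb : ℕ → ℝ := fun k => ((k:ℝ)+2) * (‖b (k+2)‖)^2 * r ^ (2*(k+2)) with hfb_def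
  have hr2 : ∀ m : ℕ, r ^ (2*m) = x ^ m := fun m => by rw [hx_def, ← pow_mul]
  have hfa_eq : ∀ k, fa k = (‖a (k+1)‖)^2 * (((k:ℝ)+1) * x^(k+1)) := by
    intro k; simp only [hfa_def]; rw [hr2]; ring
  have hfb_eq : ∀ k, fb k = (‖a (k+1)‖)^2 * ((((k:ℝ)+1)^2/((k:ℝ)+2)) * x^(k+2)) := by
    intro k
    simp only [hfb_def]
    rw [hr2, hbrel k]
    have hq : ((k:ℝ)+2) ≠ 0 := by positivity
    field_simp
  have hkey : ∀ k, fa k - fb k = (‖a (k+1)‖)^2 * T k := by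
    intro k
    rw [hfa_eq, hfb_eq, hT_def]
    ring
  have hA : ∀ k, (‖a (k+1)‖)^2 ≤ M^2 := by
    intro k
    exact pow_le_pow_left₀ (norm_nonneg _) (hM k) 2
  have hMT := hT.mul_left (M^2)
  -- summability of fa and fb
  have hfa_nonneg : ∀ k, 0 ≤ fa k := by
    intro k; simp only [hfa_def]; positivity
  have hfb_nonneg : ∀ k, 0 ≤ fb k := by
    intro k; simp only [hfb_def]; positivity
  have hM1 : M ≤ 1 := by
    rw [hM_def]; nlinarith [sq_nonneg (‖a 0‖)]
  have hA1 : ∀ k, (‖a (k+1)‖)^2 ≤ 1 := fun k => le_trans (hA k) (by nlinarith)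
  have hfa_summ : Summable fa := by
    refine Summable.of_nonneg_of_le hfa_nonneg (fun k => ?_) (S1lemma hx0 hx1).summable
    rw [hfa_eq]
    have := mul_le_mul_of_nonneg_right (hA1 k) (by positivity : (0:ℝ) ≤ ((k:ℝ)+1) * x^(k+1))
    simpa using this
  have hfb_summ : Summable fb := by
    refine Summable.of_nonneg_of_le hfb_nonneg (fun k => ?_) hfa_summ
    have := hkey k
    nlinarith [mul_nonneg (sq_nonneg (‖a (k+1)‖)) (hTnonneg k)]
  have hsub_summ : Summable (fun k => fa k - fb k) := hfa_summ.sub hfb_summ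
  have hstep : (∑' k, fa k) - (∑' k, fb k) = ∑' k, (fa k - fb k) :=
    (Summable.tsum_sub hfa_summ hfb_summ).symm
  have hle : ∑' k, (fa k - fb k) ≤ ∑' k, M^2 * T k := by
    apply Summable.tsum_le_tsum _ hsub_summ hMT.summable
    intro k
    rw [hkey k]
    exact mul_le_mul_of_nonneg_right (hA k) (hTnonneg k)
  have hfinal : ∑' k, M^2 * T k = M^2 * (2*x/(1-x) + Real.log (1-x)) := hMT.tsum_eq
  calc (∑' k, fa k) - (∑' k, fb k) = ∑' k, (fa k - fb k) := hstep
    _ ≤ ∑' k, M^2 * T k := hle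
    _ = M^2 * (2*x/(1-x) + Real.log (1-x)) := hfinal
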